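/- Let G be a finite group, n ≥ 1, and (H, Y, β) a generating symbol of SC_n(G) with β = (b_1, …, b_r). If there exists a nonempty subset I ⊆ {1, …, r} with Σ_{i ∈ I} b_i = 0 in the character group H^∨, then the class of (H, Y, β) in the combinatorial Burnside group BC_n(G) is zero. -/

import Mathlib

open scoped Classical

noncomputable section

namespace CBG

/-- The character group `A^∨ = Hom(A, ℂ^×)` of a group `A`, written additively. -/
abbrev Ch (A : Type*) [Group A] : Type _ := Additive (A →* ℂˣ)

/-- A multiset of characters generates the character group. -/
def gens {A : Type*} [Group A] (β : Multiset (Ch A)) : Prop :=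
  AddSubgroup.closure {b | b ∈ β} = ⊤

variable (G : Type*) [Group G]

/-- Generating symbols `(H, Y, β)` of the combinatorial symbols group `SC_n(G)`:
`H ⊆ G` abelian, `H ⊆ Y ⊆ Z_G(H)`, and `β` a multiset (= sequence modulo the
reordering relation (O)) of nontrivial characters of `H`, of length `1 ≤ r ≤ n`,
generating `H^∨`. -/
structure Symbol (n : ℕ) where
  H : Subgroup G
  Y : Subgroup G
  habelian : IsMulCommutative H
  hHY : H ≤ Y
  hYC : Y ≤ Subgroup.centralizer (H : Set G)
  β : Multiset (Ch H)
  hcard₁ : 1 ≤ Multiset.card β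
  hcard₂ : Multiset.card β ≤ n
  hne : ∀ b ∈ β, b ≠ 0
  hgen : gens β

/-- The combinatorial symbols group `SC_n(G)`: the free `ℤ`-module on the symbols. -/
abbrev SC (n : ℕ) : Type _ := Symbol G n →₀ ℤ

/-- The symbol `(H, Y, β)` as an element of `SC_n(G)`, with the convention that
an invalid symbol (in particular, one whose character sequence contains the
trivial character) is `0`. -/
def mkSC (n : ℕ) (H Y : Subgroup G) (β : Multiset (Ch H)) : SC G n :=
  if h : IsMulCommutative H ∧ H ≤ Y ∧ Y ≤ Subgroup.centralizer (H : Set G) ∧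
      1 ≤ Multiset.card β ∧ Multiset.card β ≤ n ∧ (∀ b ∈ β, b ≠ 0) ∧ gens β then
    Finsupp.single ⟨H, Y, h.1, h.2.1, h.2.2.1, β, h.2.2.2.1, h.2.2.2.2.1,
      h.2.2.2.2.2.1, h.2.2.2.2.2.2⟩ 1
  else 0

/-- Restriction of a character to a smaller subgroup. -/
def resCh {H K : Subgroup G} (h : K ≤ H) (b : Ch H) : Ch K :=
  Additive.ofMul ((Additive.toMul b).comp (Subgroup.inclusion h))

/-- The conjugate subgroup `gHg⁻¹`. -/
def conjSub (g : G) (H : Subgroup G) : Subgroup G :=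
  Subgroup.map (MulAut.conj g : G ≃* G) H

/-- Transport of a character of `H` to a character of `K = gHg⁻¹` along conjugation by `g`. -/
def conjChTo {H K : Subgroup G} (g : G) (hK : conjSub G g H = K) (b : Ch H) : Ch K :=
  Additive.ofMul ((Additive.toMul b).comp
    (((MulEquiv.subgroupMap (MulAut.conj g : G ≃* G) H).trans
      (MulEquiv.subgroupCongr hK)).symm.toMonoidHom))

/-- Relation (C): conjugation. -/
def relC (n : ℕ) : Set (SC G n) :=
  {x | ∃ (s : Symbol G n) (g : G),
    x = Finsupp.single s 1 -
        mkSC G n (conjSub G g s.H) (conjSub G g s.Y) (s.β.map (conjChTo G g rfl))}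

/-- Relation (V): vanishing. -/
def relV (n : ℕ) : Set (SC G n) :=
  {x | ∃ s : Symbol G n,
    (s.H = ⊥ ∨ ∃ (b₁ b₂ : Ch s.H) (rest : Multiset (Ch s.H)),
      s.β = b₁ ::ₘ b₂ ::ₘ rest ∧ b₁ + b₂ = 0) ∧
    x = Finsupp.single s 1}

/-- Relation (B2): blowup. -/
def relB2 (n : ℕ) : Set (SC G n) :=
  {x | ∃ (s : Symbol G n) (b₁ b₂ : Ch s.H) (rest : Multiset (Ch s.H)),
    s.β = b₁ ::ₘ b₂ ::ₘ rest ∧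
    ((b₁ = b₂ ∧ x = Finsupp.single s 1 - mkSC G n s.H s.Y (b₂ ::ₘ rest)) ∨
     (b₁ ≠ b₂ ∧ (∃ b ∈ s.β, b ∈ AddSubgroup.zmultiples (b₁ - b₂)) ∧
        x = Finsupp.single s 1 - mkSC G n s.H s.Y ((b₁ - b₂) ::ₘ b₂ ::ₘ rest)
            - mkSC G n s.H s.Y (b₁ ::ₘ (b₂ - b₁) ::ₘ rest)) ∨
     (b₁ ≠ b₂ ∧ ¬(∃ b ∈ s.β, b ∈ AddSubgroup.zmultiples (b₁ - b₂)) ∧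
        x = Finsupp.single s 1 - mkSC G n s.H s.Y ((b₁ - b₂) ::ₘ b₂ ::ₘ rest)
            - mkSC G n s.H s.Y (b₁ ::ₘ (b₂ - b₁) ::ₘ rest)
            - mkSC G n (Subgroup.map s.H.subtype (MonoidHom.ker (Additive.toMul (b₁ - b₂))))
                s.Y (s.β.map (resCh G (Subgroup.map_subtype_le _)))))}

/-- Relation (B2'): modified blowup. -/
def relB2' (n : ℕ) : Set (SC G n) :=
  {x | ∃ (s : Symbol G n) (b₁ b₂ : Ch s.H) (rest : Multiset (Ch s.H)),
    s.β = b₁ ::ₘ b₂ ::ₘ rest ∧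
    ((b₁ = b₂ ∧ x = Finsupp.single s 1 - mkSC G n s.H s.Y (b₂ ::ₘ rest)) ∨
     (b₁ ≠ b₂ ∧
        x = Finsupp.single s 1 - mkSC G n s.H s.Y ((b₁ - b₂) ::ₘ b₂ ::ₘ rest)
            - mkSC G n s.H s.Y (b₁ ::ₘ (b₂ - b₁) ::ₘ rest)))}

/-- The combinatorial Burnside group `BC_n(G)`. -/
abbrev BC (n : ℕ) : Type _ :=
  SC G n ⧸ Submodule.span ℤ (relC G n ∪ relV G n ∪ relB2 G n)

/-- The group `BC'_n(G)`. -/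
abbrev BC' (n : ℕ) : Type _ :=
  SC G n ⧸ Submodule.span ℤ (relC G n ∪ relV G n ∪ relB2' G n)

/-- Projection `SC_n(G) → BC_n(G)`. -/
def BCmk (n : ℕ) : SC G n →ₗ[ℤ] BC G n :=
  Submodule.mkQ _

/-- Projection `SC_n(G) → BC'_n(G)`. -/
def BC'mk (n : ℕ) : SC G n →ₗ[ℤ] BC' G n :=
  Submodule.mkQ _

end CBG

open CBG

section Helpers

variable (G : Type*) [Group G]

lemma resCh_add' {H K : Subgroup G} (h : K ≤ H) (a b : Ch H) :
    resCh G h (a + b) = resCh G h a + resCh G h b := rfl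

lemma resCh_zero' {H K : Subgroup G} (h : K ≤ H) : resCh G h (0 : Ch H) = 0 := rfl

lemma resCh_multiset_sum' {H K : Subgroup G} (h : K ≤ H) (I : Multiset (Ch H)) :
    (I.map (resCh G h)).sum = resCh G h I.sum := by
  induction I using Multiset.induction_on with
  | empty => simp [resCh_zero']
  | cons a t ih =>
      simp only [Multiset.map_cons, Multiset.sum_cons, ih, resCh_add']

lemma BCmk_rel_zero (n : ℕ) {x : SC G n}
    (hx : x ∈ relC G n ∪ relV G n ∪ relB2 G n) : BCmk G n x = 0 := by
  rw [BCmk, Submodule.mkQ_apply, Submodule.Quotient.mk_eq_zero]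
  exact Submodule.subset_span hx

lemma BC_key (n : ℕ) (k : ℕ) :
    ∀ (H Y : Subgroup G) (β I : Multiset (Ch H)),
      Multiset.card I = k → I ≤ β → I ≠ 0 → I.sum = 0 →
      BCmk G n (mkSC G n H Y β) = 0 := by
  induction k using Nat.strong_induction_on with
  | _ k IH =>
  intro H Y β I hk hIβ hI0 hIsum
  by_cases hv : IsMulCommutative H ∧ H ≤ Y ∧ Y ≤ Subgroup.centralizer (H : Set G) ∧
      1 ≤ Multiset.card β ∧ Multiset.card β ≤ n ∧ (∀ b ∈ β, b ≠ 0) ∧ gens β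
  swap
  · rw [mkSC, dif_neg hv]
    exact map_zero _
  obtain ⟨c₁, hc₁I⟩ := Multiset.exists_mem_of_ne_zero hI0
  obtain ⟨I₁, rfl⟩ := Multiset.exists_cons_of_mem hc₁I
  have hne := hv.2.2.2.2.2.1
  by_cases hI₁ : I₁ = 0
  · subst hI₁
    have hc10 : c₁ = 0 := by simpa using hIsum
    exact absurd hc10 (hne c₁ (Multiset.mem_of_le hIβ (Multiset.mem_cons_self _ _)))
  obtain ⟨c₂, hc₂⟩ := Multiset.exists_mem_of_ne_zero hI₁
  obtain ⟨J, rfl⟩ := Multiset.exists_cons_of_mem hc₂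
  obtain ⟨t, ht⟩ := Multiset.le_iff_exists_add.1 hIβ
  have hβ : β = c₁ ::ₘ c₂ ::ₘ (J + t) := by
    rw [ht]; simp [Multiset.cons_add]
  set rest : Multiset (Ch H) := J + t with hrest
  have hc₁β : c₁ ∈ β := hβ ▸ Multiset.mem_cons_self _ _
  by_cases hcc : c₁ + c₂ = 0
  · rw [mkSC, dif_pos hv]
    exact BCmk_rel_zero G n (Set.mem_union_left _ (Set.mem_union_right _
      ⟨⟨H, Y, hv.1, hv.2.1, hv.2.2.1, β, hv.2.2.2.1, hv.2.2.2.2.1, hv.2.2.2.2.2.1,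
        hv.2.2.2.2.2.2⟩, Or.inr ⟨c₁, c₂, rest, hβ, hcc⟩, rfl⟩))
  have hc₁0 : c₁ ≠ 0 := hne c₁ hc₁β
  have hJrest : J ≤ rest := Multiset.le_add_right _ _
  set γβ : Multiset (Ch H) := (c₁ + c₂) ::ₘ c₂ ::ₘ rest with hγβ
  have hcardγ : Multiset.card γβ = Multiset.card β := by
    rw [hγβ, hβ]; simp
  have hneγ : ∀ b ∈ γβ, b ≠ 0 := by
    intro b hb
    rcases Multiset.mem_cons.1 hb with rfl | hb
    · exact hcc
    · exact hne b (by rw [hβ]; exact Multiset.mem_cons_of_mem hb)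
  have hgenγ : gens γβ := by
    have hg := hv.2.2.2.2.2.2
    unfold gens at hg ⊢
    rw [eq_top_iff, ← hg]
    refine (AddSubgroup.closure_le _).2 ?_
    intro b hb
    simp only [Set.mem_setOf_eq] at hb
    rw [hβ] at hb
    rcases Multiset.mem_cons.1 hb with rfl | hb
    · have h1 : (b + c₂) ∈ AddSubgroup.closure {x : Ch H | x ∈ γβ} :=
        AddSubgroup.subset_closure (Multiset.mem_cons_self _ _)
      have h2 : c₂ ∈ AddSubgroup.closure {x : Ch H | x ∈ γβ} :=
        AddSubgroup.subset_closure (Multiset.mem_cons_of_mem (Multiset.mem_cons_self _ _))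
      have h3 := AddSubgroup.sub_mem _ h1 h2
      exact add_sub_cancel_right b c₂ ▸ h3
    · exact AddSubgroup.subset_closure (Multiset.mem_cons_of_mem hb)
  have hvγ : IsMulCommutative H ∧ H ≤ Y ∧ Y ≤ Subgroup.centralizer (H : Set G) ∧
      1 ≤ Multiset.card γβ ∧ Multiset.card γβ ≤ n ∧ (∀ b ∈ γβ, b ≠ 0) ∧ gens γβ :=
    ⟨hv.1, hv.2.1, hv.2.2.1, by rw [hcardγ]; exact hv.2.2.2.1,
      by rw [hcardγ]; exact hv.2.2.2.2.1, hneγ, hgenγ⟩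
  set γ : Symbol G n := ⟨H, Y, hvγ.1, hvγ.2.1, hvγ.2.2.1, γβ, hvγ.2.2.2.1,
    hvγ.2.2.2.2.1, hvγ.2.2.2.2.2.1, hvγ.2.2.2.2.2.2⟩ with hγdef
  have hγmk : mkSC G n H Y γβ = Finsupp.single γ 1 := by
    rw [mkSC, dif_pos hvγ, hγdef]
  have hklt : Multiset.card J + 1 < k := by
    simp only [Multiset.card_cons] at hk
    omega
  have hsumγ : ((c₁ + c₂) ::ₘ J).sum = 0 := by
    simp only [Multiset.sum_cons] at hIsum ⊢
    exact add_assoc c₁ c₂ J.sum ▸ hIsum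
  have hIγle : (c₁ + c₂) ::ₘ J ≤ γβ := by
    rw [hγβ]
    exact Multiset.cons_le_cons _ (hJrest.trans (Multiset.le_cons_self _ _))
  have hIγle' : (c₁ + c₂) ::ₘ J ≤ (c₁ + c₂) ::ₘ (c₂ - (c₁ + c₂)) ::ₘ rest :=
    Multiset.cons_le_cons _ (hJrest.trans (Multiset.le_cons_self _ _))
  have hIγ0 : ((c₁ + c₂) ::ₘ J) ≠ 0 := Multiset.cons_ne_zero
  have hγ0 : BCmk G n (Finsupp.single γ 1) = 0 := by
    rw [← hγmk]
    exact IH _ hklt H Y γβ ((c₁ + c₂) ::ₘ J) (by simp) hIγle hIγ0 hsumγ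
  have hB0 : BCmk G n (mkSC G n H Y ((c₁ + c₂) ::ₘ (c₂ - (c₁ + c₂)) ::ₘ rest)) = 0 :=
    IH _ hklt H Y _ ((c₁ + c₂) ::ₘ J) (by simp) hIγle' hIγ0 hsumγ
  have hC0 : BCmk G n (mkSC G n
      (Subgroup.map H.subtype (MonoidHom.ker (Additive.toMul ((c₁ + c₂) - c₂)))) Y
      (γβ.map (resCh G (Subgroup.map_subtype_le _)))) = 0 := by
    refine IH _ hklt _ Y _
      (Multiset.map (resCh G (Subgroup.map_subtype_le _)) ((c₁ + c₂) ::ₘ J))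
      (by simp) (Multiset.map_le_map hIγle) (by simp) ?_
    refine (resCh_multiset_sum' G _ ((c₁ + c₂) ::ₘ J)).trans ?_
    rw [hsumγ]
    exact resCh_zero' G _
  have hA : ((c₁ + c₂) - c₂) ::ₘ c₂ ::ₘ rest = β := by
    rw [hβ]
    exact congrArg (fun x => x ::ₘ c₂ ::ₘ rest) (add_sub_cancel_right c₁ c₂)
  have hne12 : (c₁ + c₂ : Ch H) ≠ c₂ := by
    intro hcontra
    exact hc₁0 ((add_eq_right (a := c₁) (b := c₂)).mp hcontra)
  by_cases hex : ∃ b ∈ γβ, b ∈ AddSubgroup.zmultiples ((c₁ + c₂) - c₂)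
  · have hx0 : BCmk G n (Finsupp.single γ 1
        - mkSC G n H Y (((c₁ + c₂) - c₂) ::ₘ c₂ ::ₘ rest)
        - mkSC G n H Y ((c₁ + c₂) ::ₘ (c₂ - (c₁ + c₂)) ::ₘ rest)) = 0 :=
      BCmk_rel_zero G n (Set.mem_union_right _
        ⟨γ, c₁ + c₂, c₂, rest, rfl, Or.inr (Or.inl ⟨hne12, hex, rfl⟩)⟩)
    rw [hA, map_sub, map_sub, hγ0, hB0] at hx0
    simpa using hx0
  · have hx0 : BCmk G n (Finsupp.single γ 1
        - mkSC G n H Y (((c₁ + c₂) - c₂) ::ₘ c₂ ::ₘ rest)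
        - mkSC G n H Y ((c₁ + c₂) ::ₘ (c₂ - (c₁ + c₂)) ::ₘ rest)
        - mkSC G n (Subgroup.map H.subtype
            (MonoidHom.ker (Additive.toMul ((c₁ + c₂) - c₂)))) Y
            (γβ.map (resCh G (Subgroup.map_subtype_le _)))) = 0 :=
      BCmk_rel_zero G n (Set.mem_union_right _
        ⟨γ, c₁ + c₂, c₂, rest, rfl, Or.inr (Or.inr ⟨hne12, hex, rfl⟩)⟩)
    rw [hA, map_sub, map_sub, map_sub, hγ0, hB0, hC0] at hx0
    simpa using hx0

end Helpers

/-- Let `G` be a finite group, `n ≥ 1`, and `(H, Y, β)` a generating symbol of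
`SC_n(G)`.  If some nonempty subsequence `I` of `β` has `∑_{b ∈ I} b = 0` in `H^∨`,
then the class of `(H, Y, β)` in `BC_n(G)` is zero. -/
theorem BC_symbol_vanishes_of_subset_sum_zero (G : Type*) [Group G] [Fintype G]
    (n : ℕ) (hn : 1 ≤ n) (s : Symbol G n)
    (h : ∃ I : Multiset (Ch s.H), I ≤ s.β ∧ I ≠ 0 ∧ I.sum = 0) :
    BCmk G n (Finsupp.single s 1) = 0 := by
  obtain ⟨I, hIle, hI0, hIsum⟩ := h
  have hmk : mkSC G n s.H s.Y s.β = Finsupp.single s 1 := by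
    rw [mkSC, dif_pos ⟨s.habelian, s.hHY, s.hYC, s.hcard₁, s.hcard₂, s.hne, s.hgen⟩]
  rw [← hmk]
  exact BC_key G n (Multiset.card I) s.H s.Y s.β I rfl hIle hI0 hIsum
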